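/- Let p ≥ 0 be real, λ > 0 real, γ, σ complex, a complex that is not a nonpositive integer, and ϑ, υ complex with Re(υ) > Re(ϑ) > 0. Then for all complex z with |z| < 1, the first derivative with respect to z satisfies d/dz [Φ_{γ,ϑ;υ}(z,σ,a;p,λ)] = (γϑ/υ) · Φ_{γ+1,ϑ+1;υ+1}(z,σ,a+1;p,λ). -/

import Mathlib

open MeasureTheory Set Filter

/-- Mittag-Leffler function `E_λ(z) = ∑ z^n / Γ(λ n + 1)`. -/
noncomputable def mittagLeffler (lam : ℝ) (z : ℂ) : ℂ :=
  ∑' n : ℕ, z ^ n / (Real.Gamma (lam * n + 1) : ℂ)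

/-- Extended beta function `B(x,y;p,λ)`. -/
noncomputable def extBeta (x y : ℂ) (p lam : ℝ) : ℂ :=
  ∫ t in (0:ℝ)..1, (t : ℂ) ^ (x - 1) * ((1 : ℂ) - (t : ℂ)) ^ (y - 1) *
    mittagLeffler lam (-(p : ℂ) / ((t : ℂ) * (1 - (t : ℂ))))

/-- Classical beta function `B(x,y) = B(x,y;0,1)`. -/
noncomputable def classicalBeta (x y : ℂ) : ℂ := extBeta x y 0 1

/-- Pochhammer symbol `(x)_n = x (x+1) ⋯ (x+n-1)`. -/
noncomputable def poch (x : ℂ) (n : ℕ) : ℂ := (ascPochhammer ℂ n).eval x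

/-- Extended Hurwitz–Lerch zeta function `Φ_{γ,ϑ;υ}(z,σ,a;p,λ)`. -/
noncomputable def extHLZeta (γ ϑ υ z σ a : ℂ) (p lam : ℝ) : ℂ :=
  ∑' n : ℕ, poch γ n * extBeta (ϑ + n) (υ - ϑ) p lam /
    (classicalBeta ϑ (υ - ϑ) * (n.factorial : ℂ)) * z ^ n / ((n : ℂ) + a) ^ σ

/-- Extended Gauss hypergeometric function `F_p^λ(γ,ϑ;υ;z)`. -/
noncomputable def extHyper (γ ϑ υ : ℂ) (p lam : ℝ) (z : ℂ) : ℂ :=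
  ∑' n : ℕ, poch γ n * extBeta (ϑ + n) (υ - ϑ) p lam /
    classicalBeta ϑ (υ - ϑ) * z ^ n / (n.factorial : ℂ)

/-- Goyal–Laddha Hurwitz–Lerch zeta function `Φ*_γ(z,σ,a)`. -/
noncomputable def goyalLaddha (γ z σ a : ℂ) : ℂ :=
  ∑' n : ℕ, poch γ n / (n.factorial : ℂ) * z ^ n / ((n : ℂ) + a) ^ σ

/-- Limiting case `Φ*_{ϑ;υ}(z,σ,a;p,λ)`. -/
noncomputable def limitHLZeta (ϑ υ z σ a : ℂ) (p lam : ℝ) : ℂ :=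
  ∑' n : ℕ, extBeta (ϑ + n) (υ - ϑ) p lam /
    (classicalBeta ϑ (υ - ϑ) * (n.factorial : ℂ)) * z ^ n / ((n : ℂ) + a) ^ σ

/-- Garg Hurwitz–Lerch zeta function `Φ_{γ,ϑ;υ}(z,σ,a)`. -/
noncomputable def gargZeta (γ ϑ υ z σ a : ℂ) : ℂ :=
  ∑' n : ℕ, poch γ n * poch ϑ n / (poch υ n * (n.factorial : ℂ)) *
    z ^ n / ((n : ℂ) + a) ^ σ

lemma classicalBeta_eq (x y : ℂ) : classicalBeta x y = Complex.betaIntegral x y := by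
  unfold classicalBeta extBeta Complex.betaIntegral
  refine intervalIntegral.integral_congr fun t _ => ?_
  have h0 : -((0:ℝ):ℂ) / ((t:ℂ) * (1 - (t:ℂ))) = 0 := by simp
  have hM : mittagLeffler 1 (-((0:ℝ):ℂ) / ((t:ℂ) * (1 - (t:ℂ)))) = 1 := by
    rw [h0]
    unfold mittagLeffler
    rw [tsum_eq_single 0 (fun n hn => by simp [zero_pow hn])]
    simp [Real.Gamma_one]
  rw [hM, mul_one]

lemma classicalBeta_formula {x y : ℂ} (hx : 0 < x.re) (hy : 0 < y.re) :
    classicalBeta x y = Complex.Gamma x * Complex.Gamma y / Complex.Gamma (x + y) := by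
  rw [classicalBeta_eq, eq_div_iff (Complex.Gamma_ne_zero (fun m => by
    intro h; have := h ▸ Complex.add_re x y; simp at this; nlinarith [this, (by positivity : (0:ℝ) ≤ (m:ℝ))]))]
  rw [mul_comm, ← Complex.Gamma_mul_Gamma_eq_betaIntegral hx hy]

lemma classicalBeta_ne_zero {x y : ℂ} (hx : 0 < x.re) (hy : 0 < y.re) :
    classicalBeta x y ≠ 0 := by
  rw [classicalBeta_formula hx hy]
  have hne : ∀ s : ℂ, 0 < s.re → Complex.Gamma s ≠ 0 := by
    intro s hs
    apply Complex.Gamma_ne_zero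
    intro m h
    rw [h] at hs; simp at hs
    nlinarith [hs, (by positivity : (0:ℝ) ≤ (m:ℝ))]
  have hxy : 0 < (x+y).re := by simp [Complex.add_re]; positivity
  exact div_ne_zero (mul_ne_zero (hne x hx) (hne y hy)) (hne _ hxy)

lemma classicalBeta_shift {ϑ υ : ℂ} (hϑ : 0 < ϑ.re) (hυϑ : ϑ.re < υ.re) :
    classicalBeta (ϑ+1) (υ-ϑ) = ϑ/υ * classicalBeta ϑ (υ-ϑ) := by
  have hy : 0 < (υ-ϑ).re := by simp [Complex.sub_re]; linarith
  have h1 : 0 < (ϑ+1).re := by simp [Complex.add_re]; linarith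
  have hυ : 0 < υ.re := lt_trans hϑ hυϑ
  rw [classicalBeta_formula h1 hy, classicalBeta_formula hϑ hy]
  have e1 : ϑ + 1 + (υ - ϑ) = υ + 1 := by ring
  have e2 : ϑ + (υ - ϑ) = υ := by ring
  rw [e1, e2, Complex.Gamma_add_one _ (by intro h; rw [h] at hϑ; simp at hϑ),
    Complex.Gamma_add_one _ (by intro h; rw [h] at hυ; simp at hυ)]
  have hne : ∀ s : ℂ, 0 < s.re → Complex.Gamma s ≠ 0 := by
    intro s hs
    apply Complex.Gamma_ne_zero
    intro m h
    rw [h] at hs; simp at hs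
    nlinarith [hs, (by positivity : (0:ℝ) ≤ (m:ℝ))]
  have hϑ0 : ϑ ≠ 0 := by intro h; rw [h] at hϑ; simp at hϑ
  have hυ0 : υ ≠ 0 := by intro h; rw [h] at hυ; simp at hυ
  field_simp

lemma ascPochhammer_nonneg (n : ℕ) {x : ℝ} (hx : 0 ≤ x) :
    0 ≤ (ascPochhammer ℝ n).eval x := by
  induction n with
  | zero => simp
  | succ n ih => rw [ascPochhammer_succ_eval]; positivity

lemma norm_poch_le (γ : ℂ) (n : ℕ) :
    ‖poch γ n‖ ≤ (ascPochhammer ℝ n).eval ‖γ‖ := by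
  induction n with
  | zero => simp [poch]
  | succ n ih =>
      rw [poch, ascPochhammer_succ_eval, ascPochhammer_succ_eval, norm_mul]
      apply mul_le_mul ih ?_ (norm_nonneg _) (ascPochhammer_nonneg n (norm_nonneg _))
      exact (norm_add_le _ _).trans (by simp)

lemma ascPochhammer_mono (n : ℕ) {x y : ℝ} (hx : 0 ≤ x) (hxy : x ≤ y) :
    (ascPochhammer ℝ n).eval x ≤ (ascPochhammer ℝ n).eval y := by
  induction n with
  | zero => simp
  | succ n ih =>
      rw [ascPochhammer_succ_eval, ascPochhammer_succ_eval]
      apply mul_le_mul ih (by linarith) (by positivity) ((ascPochhammer_nonneg n hx).trans ih)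

lemma nat_aux (m n : ℕ) : (n+1)^m * (m+n) ≤ (n+1) * (n+2)^m := by
  induction m with
  | zero => simp
  | succ m ih =>
      have h : (n+1)^m ≤ (n+2)^m := Nat.pow_le_pow_left (by omega) m
      calc (n+1)^(m+1) * (m+1+n) = (n+1) * ((n+1)^m * (m+n)) + (n+1) * (n+1)^m := by ring
        _ ≤ (n+1) * ((n+1) * (n+2)^m) + (n+1) * (n+2)^m := by
            exact Nat.add_le_add (Nat.mul_le_mul_left _ ih) (Nat.mul_le_mul_left _ h)
        _ = (n+1) * (n+2)^(m+1) := by ring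

lemma poch_nat_le (m n : ℕ) :
    (ascPochhammer ℕ n).eval m ≤ n.factorial * (n+1)^m := by
  induction n with
  | zero => simp
  | succ n ih =>
      rw [ascPochhammer_succ_eval]
      calc (ascPochhammer ℕ n).eval m * (m + n) ≤ (n.factorial * (n+1)^m) * (m+n) :=
            Nat.mul_le_mul_right _ ih
        _ = n.factorial * ((n+1)^m * (m+n)) := by ring
        _ ≤ n.factorial * ((n+1) * (n+2)^m) := Nat.mul_le_mul_left _ (nat_aux m n)
        _ = (n+1).factorial * (n+2)^m := by rw [Nat.factorial_succ]; ring

lemma norm_poch_div_factorial (γ : ℂ) : ∃ (m : ℕ), ∀ n : ℕ,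
    ‖poch γ n‖ / n.factorial ≤ (n+1)^m := by
  refine ⟨⌈‖γ‖⌉₊, fun n => ?_⟩
  rw [div_le_iff₀ (by positivity)]
  calc ‖poch γ n‖ ≤ (ascPochhammer ℝ n).eval ‖γ‖ := norm_poch_le γ n
    _ ≤ (ascPochhammer ℝ n).eval ((⌈‖γ‖⌉₊ : ℕ) : ℝ) :=
        ascPochhammer_mono n (norm_nonneg _) (Nat.le_ceil _)
    _ = (((ascPochhammer ℕ n).eval ⌈‖γ‖⌉₊ : ℕ) : ℝ) := (ascPochhammer_eval_cast (S := ℝ) n _).symm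
    _ ≤ ((n.factorial * (n+1)^(⌈‖γ‖⌉₊) : ℕ) : ℝ) := by exact_mod_cast poch_nat_le _ n
    _ = ((n:ℝ)+1)^(⌈‖γ‖⌉₊) * n.factorial := by push_cast; ring

lemma cpow_inv_bound (σ a : ℂ) (ha : ∀ m : ℕ, a ≠ -(m : ℂ)) :
    ∃ (C : ℝ) (k : ℕ), 0 ≤ C ∧ ∀ n : ℕ, ‖((n:ℂ) + a) ^ σ‖⁻¹ ≤ C * (n+1)^k := by
  have hz : ∀ n : ℕ, (n:ℂ) + a ≠ 0 := by
    intro n h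
    exact ha n (by linear_combination h)
  -- lower bound δ on ‖n+a‖
  set N := ⌈‖a‖⌉₊ with hN
  set δ : ℝ := min 1 ((Finset.range (N+1)).inf' (by simp) fun i => ‖(i:ℂ) + a‖) with hδ
  have hδpos : 0 < δ := by
    rw [hδ]
    apply lt_min one_pos
    rw [Finset.lt_inf'_iff]
    intro i _
    exact norm_pos_iff.mpr (hz i)
  have hδle : ∀ n : ℕ, δ ≤ ‖(n:ℂ) + a‖ := by
    intro n
    rcases le_or_gt n N with h | h
    · exact (min_le_right _ _).trans
        (Finset.inf'_le _ (Finset.mem_range.mpr (by omega)))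
    · refine (min_le_left _ _).trans ?_
      have h1 : (n:ℝ) ≥ ‖a‖ + 1 := by
        have h2 : (N:ℝ) + 1 ≤ n := by exact_mod_cast Nat.succ_le_of_lt h
        have h3 : ‖a‖ ≤ (N:ℝ) := Nat.le_ceil _
        linarith
      have h2 : ‖(n:ℂ)‖ - ‖a‖ ≤ ‖(n:ℂ) + a‖ := by
        have := norm_add_le ((n:ℂ) + a) (-a)
        simp only [add_neg_cancel_right, norm_neg] at this
        linarith
      rw [Complex.norm_natCast] at h2
      linarith
  have hub : ∀ n : ℕ, ‖(n:ℂ) + a‖ ≤ (‖a‖ + 1) * (n + 1) := by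
    intro n
    have := norm_add_le ((n:ℂ)) a
    rw [Complex.norm_natCast] at this
    nlinarith [norm_nonneg a, (by positivity : (0:ℝ) ≤ (n:ℝ))]
  have hinv : ∀ n : ℕ, ‖((n:ℂ) + a) ^ σ‖⁻¹ ≤
      Real.exp (Real.pi * |σ.im|) * ‖(n:ℂ) + a‖ ^ (-σ.re) := by
    intro n
    rw [Complex.norm_cpow_of_ne_zero (hz n)]
    rw [div_eq_mul_inv, mul_inv, inv_inv, ← Real.rpow_neg (norm_nonneg _)]
    rw [mul_comm]
    apply mul_le_mul_of_nonneg_right _ (Real.rpow_nonneg (norm_nonneg _) _)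
    apply Real.exp_le_exp.mpr
    calc ((n:ℂ) + a).arg * σ.im ≤ |((n:ℂ) + a).arg * σ.im| := le_abs_self _
      _ = |((n:ℂ) + a).arg| * |σ.im| := abs_mul _ _
      _ ≤ Real.pi * |σ.im| := by
          apply mul_le_mul_of_nonneg_right (Complex.abs_arg_le_pi _) (abs_nonneg _)
  rcases le_or_gt 0 σ.re with hs | hs
  · refine ⟨Real.exp (Real.pi * |σ.im|) * δ ^ (-σ.re), 0, by positivity, fun n => ?_⟩
    rw [pow_zero, mul_one]
    refine (hinv n).trans ?_
    apply mul_le_mul_of_nonneg_left _ (Real.exp_nonneg _)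
    exact Real.rpow_le_rpow_of_nonpos hδpos (hδle n) (by linarith)
  · set k := ⌈-σ.re⌉₊ with hk
    refine ⟨Real.exp (Real.pi * |σ.im|) * (‖a‖+1)^k, k, by positivity, fun n => ?_⟩
    refine (hinv n).trans ?_
    rw [mul_assoc]
    apply mul_le_mul_of_nonneg_left _ (Real.exp_nonneg _)
    have h1 : 1 ≤ (‖a‖ + 1) * (n + 1) := by nlinarith [norm_nonneg a, (by positivity : (0:ℝ) ≤ (n:ℝ))]
    calc ‖(n:ℂ) + a‖ ^ (-σ.re) ≤ ((‖a‖+1) * (n+1)) ^ (-σ.re) :=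
          Real.rpow_le_rpow (norm_nonneg _) (hub n) (by linarith)
      _ ≤ ((‖a‖+1) * (n+1)) ^ (k:ℝ) :=
          Real.rpow_le_rpow_of_exponent_le h1 (Nat.le_ceil _)
      _ = ((‖a‖+1) * (n+1)) ^ k := by
          rw [Real.rpow_natCast]
      _ = (‖a‖+1)^k * ((n:ℝ)+1)^k := by rw [mul_pow]

set_option maxHeartbeats 1000000 in
lemma extBeta_bounded (x y : ℂ) (p lam : ℝ) :
    ∃ C : ℝ, 0 ≤ C ∧ ∀ n : ℕ, ‖extBeta (x + (n:ℂ)) y p lam‖ ≤ C := by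
  set F : ℕ → ℝ → ℂ := fun n t => (t : ℂ) ^ (x + (n:ℂ) - 1) * ((1 : ℂ) - (t : ℂ)) ^ (y - 1) *
    mittagLeffler lam (-(p : ℂ) / ((t : ℂ) * (1 - (t : ℂ)))) with hF
  have hgF : ∀ n : ℕ, extBeta (x + (n:ℂ)) y p lam = ∫ t in (0:ℝ)..1, F n t := fun n => rfl
  by_cases hI : ∃ N, IntervalIntegrable (F N) volume 0 1
  · obtain ⟨N, hN⟩ := hI
    -- factorization for n ≥ N on (0,1]
    have key : ∀ n, N ≤ n → ∀ t : ℝ, t ∈ Ioc (0:ℝ) 1 → F n t = (t:ℂ)^(n - N) * F N t := by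
      intro n hn t ht
      have ht0 : (t:ℂ) ≠ 0 := by exact_mod_cast ne_of_gt ht.1
      have harg : x + (n:ℂ) - 1 = ((n - N : ℕ):ℂ) + (x + (N:ℂ) - 1) := by
        rw [Nat.cast_sub hn]; push_cast; ring
      rw [hF]
      simp only
      rw [harg, Complex.cpow_add _ _ ht0, Complex.cpow_natCast]
      ring
    have keynorm : ∀ n, N ≤ n → ∀ t : ℝ, t ∈ Ioc (0:ℝ) 1 → ‖F n t‖ ≤ ‖F N t‖ := by
      intro n hn t ht
      rw [key n hn t ht, norm_mul, norm_pow, Complex.norm_real]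
      have h1 : ‖t‖ ≤ 1 := by rw [Real.norm_eq_abs, abs_of_pos ht.1]; exact ht.2
      calc ‖t‖ ^ (n - N) * ‖F N t‖ ≤ 1 * ‖F N t‖ := by
            apply mul_le_mul_of_nonneg_right _ (norm_nonneg _)
            exact pow_le_one₀ (norm_nonneg _) h1
        _ = ‖F N t‖ := one_mul _
    have hIoc : uIoc (0:ℝ) 1 = Ioc (0:ℝ) 1 := uIoc_of_le (by norm_num)
    have hmeasN : AEStronglyMeasurable (F N) (volume.restrict (uIoc (0:ℝ) 1)) :=
      hN.def'.aestronglyMeasurable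
    have hint : ∀ n, N ≤ n → IntervalIntegrable (F n) volume 0 1 := by
      intro n hn
      apply hN.mono_fun ?_ ?_
      · -- AEStronglyMeasurable (F n)
        have : (F n) =ᵐ[volume.restrict (uIoc (0:ℝ) 1)]
            fun t => (t:ℂ)^(n - N) * F N t := by
          rw [hIoc, Filter.EventuallyEq, ae_restrict_iff' measurableSet_Ioc]
          exact Eventually.of_forall (fun t ht => key n hn t ht)
        refine AEStronglyMeasurable.congr ?_ this.symm
        exact ((Complex.continuous_ofReal.pow (n-N)).aestronglyMeasurable).mul hmeasN
      · rw [hIoc, Filter.EventuallyLE, ae_restrict_iff' measurableSet_Ioc]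
        exact Eventually.of_forall (fun t ht => keynorm n hn t ht)
    set C0 : ℝ := ∫ t in (0:ℝ)..1, ‖F N t‖ with hC0
    have hC0nonneg : 0 ≤ C0 :=
      intervalIntegral.integral_nonneg (by norm_num) (fun t _ => norm_nonneg _)
    set C : ℝ := C0 + ∑ i ∈ Finset.range N, ‖extBeta (x + (i:ℂ)) y p lam‖ with hC
    have hsum_nonneg : 0 ≤ ∑ i ∈ Finset.range N, ‖extBeta (x + (i:ℂ)) y p lam‖ :=
      Finset.sum_nonneg (fun i _ => norm_nonneg _)
    refine ⟨C, by positivity, fun n => ?_⟩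
    rcases lt_or_ge n N with h | h
    · have : ‖extBeta (x + (n:ℂ)) y p lam‖ ≤
          ∑ i ∈ Finset.range N, ‖extBeta (x + (i:ℂ)) y p lam‖ :=
        Finset.single_le_sum (f := fun i : ℕ => ‖extBeta (x + (i:ℂ)) y p lam‖)
          (fun i _ => norm_nonneg _) (Finset.mem_range.mpr h)
      rw [hC]; linarith
    · have h1 : ‖extBeta (x + (n:ℂ)) y p lam‖ ≤ ∫ t in (0:ℝ)..1, ‖F n t‖ := by
        rw [hgF n]
        exact intervalIntegral.norm_integral_le_integral_norm (by norm_num)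
      have h2 : (∫ t in (0:ℝ)..1, ‖F n t‖) ≤ C0 := by
        rw [hC0]
        apply intervalIntegral.integral_mono_ae_restrict (by norm_num)
          (hint n h).norm hN.norm
        rw [Filter.EventuallyLE, ae_restrict_iff' measurableSet_Icc]
        have hae : ∀ᵐ t : ℝ ∂volume, t ≠ 0 := by
          have h0 : {t : ℝ | ¬ t ≠ 0} = ({0} : Set ℝ) := by ext t; simp
          rw [ae_iff, h0]
          exact measure_singleton 0
        filter_upwards [hae] with t ht0 htIcc
        exact keynorm n h t ⟨lt_of_le_of_ne htIcc.1 (Ne.symm ht0), htIcc.2⟩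
      rw [hC]; linarith
  · push_neg at hI
    refine ⟨0, le_refl _, fun n => ?_⟩
    rw [hgF n, intervalIntegral.integral_undef (hI n)]
    simp

lemma poch_succ (γ : ℂ) (n : ℕ) : poch γ (n+1) = γ * poch (γ+1) n := by
  unfold poch
  rw [ascPochhammer_succ_left, Polynomial.eval_mul, Polynomial.eval_X, Polynomial.eval_comp]
  simp


lemma alg_aux (γ ϑ υ P g B F n1 c z : ℂ) (hB : B ≠ 0) (hϑ : ϑ ≠ 0) (hυ : υ ≠ 0)
    (hF : F ≠ 0) (hn1 : n1 ≠ 0) (hc : c ≠ 0) :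
    γ * P * g / (B * (n1 * F)) / c * (n1 * z) =
      γ * ϑ / υ * (P * g / (ϑ / υ * B * F) * z / c) := by
  have hx : ϑ / υ ≠ 0 := div_ne_zero hϑ hυ
  have h1 : B * (n1 * F) = n1 * (B * F) := by ring
  have h2 : ϑ / υ * B * F = (ϑ/υ) * (B * F) := by ring
  rw [h1, h2]
  have h3 : γ * P * g / (n1 * (B * F)) / c * (n1 * z) =
      γ * (n1 * (P * g) / (n1 * (B * F))) * z / c := by ring
  have h4 : γ * ϑ / υ * (P * g / ((ϑ/υ) * (B * F)) * z / c) =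
      γ * ((ϑ/υ) * (P * g) / ((ϑ/υ) * (B * F))) * z / c := by ring
  rw [h3, h4, mul_div_mul_left _ _ hn1, mul_div_mul_left _ _ hx]

set_option maxHeartbeats 2000000 in
/-- first derivative formula for the extended Hurwitz–Lerch
zeta function. -/
theorem extHLZeta_deriv (p lam : ℝ) (γ σ a ϑ υ : ℂ)
    (hp : 0 ≤ p) (hlam : 0 < lam) (ha : ∀ m : ℕ, a ≠ -(m : ℂ))
    (hϑ : 0 < ϑ.re) (hυϑ : ϑ.re < υ.re) :
    ∀ z : ℂ, ‖z‖ < 1 →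
      deriv (fun w => extHLZeta γ ϑ υ w σ a p lam) z =
        γ * ϑ / υ * extHLZeta (γ + 1) (ϑ + 1) (υ + 1) z σ (a + 1) p lam := by
  intro z hz
  have hυ : 0 < υ.re := lt_trans hϑ hυϑ
  have hϑ0 : ϑ ≠ 0 := fun h => by rw [h] at hϑ; simp at hϑ
  have hυ0 : υ ≠ 0 := fun h => by rw [h] at hυ; simp at hυ
  have hy : 0 < (υ - ϑ).re := by simp [Complex.sub_re]; linarith
  have hB : classicalBeta ϑ (υ - ϑ) ≠ 0 := classicalBeta_ne_zero hϑ hy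
  set B := classicalBeta ϑ (υ - ϑ) with hBdef
  set d : ℕ → ℂ := fun n => poch γ n * extBeta (ϑ + n) (υ - ϑ) p lam /
    (B * (n.factorial : ℂ)) / ((n : ℂ) + a) ^ σ with hd
  -- the function as a power series
  have hfun : (fun w => extHLZeta γ ϑ υ w σ a p lam) = fun w => ∑' n : ℕ, d n * w ^ n := by
    funext w
    exact tsum_congr fun n => by rw [hd]; ring
  -- coefficient bound
  obtain ⟨m, hm⟩ := norm_poch_div_factorial γ
  obtain ⟨Ca, ka, hCa0, hCa⟩ := cpow_inv_bound σ a ha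
  obtain ⟨Cg, hCg0, hCg⟩ := extBeta_bounded ϑ (υ - ϑ) p lam
  set C : ℝ := Cg * ‖B‖⁻¹ * Ca with hCdef
  set k : ℕ := m + ka with hkdef
  have hC0 : 0 ≤ C := by positivity
  have hdb : ∀ n : ℕ, ‖d n‖ ≤ C * (n+1)^k := by
    intro n
    have heq : ‖d n‖ = (‖poch γ n‖ / n.factorial) * ‖extBeta (ϑ + n) (υ - ϑ) p lam‖ *
        ‖B‖⁻¹ * ‖((n : ℂ) + a) ^ σ‖⁻¹ := by
      rw [hd]
      simp only [norm_div, norm_mul, Complex.norm_natCast]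
      field_simp
    rw [heq]
    calc (‖poch γ n‖ / n.factorial) * ‖extBeta (ϑ + n) (υ - ϑ) p lam‖ * ‖B‖⁻¹ *
        ‖((n : ℂ) + a) ^ σ‖⁻¹
        ≤ ((n+1:ℝ)^m) * Cg * ‖B‖⁻¹ * (Ca * (n+1)^ka) := by
          have h1 := hm n
          have h2 := hCg n
          have h3 := hCa n
          have hnn : (0:ℝ) ≤ ‖poch γ n‖ / n.factorial := by positivity
          gcongr
        _ = C * (n+1)^k := by rw [hCdef, hkdef, pow_add]; ring
  -- derivative via term-by-term differentiation on a ball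
  set r : ℝ := (‖z‖ + 1) / 2 with hr
  have hr0 : 0 < r := by rw [hr]; positivity
  have hr1 : r < 1 := by rw [hr]; linarith
  have hzr : z ∈ Metric.ball (0:ℂ) r := by
    rw [Metric.mem_ball, dist_zero_right]
    rw [hr]; change ‖z‖ < _; linarith
  set u : ℕ → ℝ := fun n => C * (n+1)^(k+1) * r^n / r with hu
  have hrpow : ∀ n : ℕ, r^(n-1) ≤ r^n / r := by
    intro n
    cases n with
    | zero => simpa using (one_le_one_div hr0 hr1.le)
    | succ n => rw [pow_succ]; rw [mul_div_assoc, div_self hr0.ne']; simp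
  have husum : Summable u := by
    have base : Summable (fun n : ℕ => (n:ℝ)^(k+1) * r^n) :=
      summable_pow_mul_geometric_of_norm_lt_one (k+1)
        (by rw [Real.norm_eq_abs, abs_of_pos hr0]; exact hr1)
    have h2 : Summable (fun n : ℕ => ((n+1:ℕ):ℝ)^(k+1) * r^(n+1)) :=
      (summable_nat_add_iff 1).mpr base
    apply (h2.mul_left (C / r^2)).congr
    intro n
    rw [hu]
    push_cast
    field_simp
    ring
  have hbound : ∀ (n : ℕ) (w : ℂ), w ∈ Metric.ball (0:ℂ) r →
      ‖d n * ((n:ℂ) * w^(n-1))‖ ≤ u n := by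
    intro n w hw
    rw [Metric.mem_ball, dist_zero_right] at hw
    have h1 : ‖d n * ((n:ℂ) * w^(n-1))‖ = ‖d n‖ * ((n:ℝ) * ‖w‖^(n-1)) := by
      rw [norm_mul, norm_mul, norm_pow, Complex.norm_natCast]
    rw [h1, hu]
    calc ‖d n‖ * ((n:ℝ) * ‖w‖^(n-1))
        ≤ (C * (n+1)^k) * (((n:ℝ)+1) * r^(n-1)) := by
          have h2 : ‖w‖^(n-1) ≤ r^(n-1) := pow_le_pow_left₀ (norm_nonneg _) hw.le _
          have h3 : (n:ℝ) ≤ (n:ℝ)+1 := by linarith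
          have := hdb n
          gcongr
      _ ≤ (C * (n+1)^k) * (((n:ℝ)+1) * (r^n / r)) := by
          have := hrpow n
          gcongr
      _ = C * (n+1)^(k+1) * r^n / r := by rw [pow_succ]; ring
  have hderiv : HasDerivAt (fun w => ∑' n : ℕ, d n * w ^ n)
      (∑' n : ℕ, d n * ((n:ℂ) * z^(n-1))) z := by
    apply hasDerivAt_tsum_of_isPreconnected husum Metric.isOpen_ball
      (convex_ball (0:ℂ) r).isPreconnected
      (g' := fun n w => d n * ((n:ℂ) * w^(n-1)))
      (fun n w _ => (hasDerivAt_pow n w).const_mul (d n))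
      hbound (Metric.mem_ball_self hr0) ?_ hzr
    · apply summable_of_ne_finset_zero (s := {0})
      intro n hn
      simp only [Finset.mem_singleton] at hn
      rw [zero_pow hn, mul_zero]
  have hLHS : deriv (fun w => extHLZeta γ ϑ υ w σ a p lam) z
      = ∑' n : ℕ, d n * ((n:ℂ) * z^(n-1)) := by
    rw [hfun]
    exact hderiv.deriv
  rw [hLHS]
  -- summability of the derivative series
  have hsum' : Summable (fun n : ℕ => d n * ((n:ℂ) * z^(n-1))) :=
    Summable.of_norm_bounded husum (fun n => hbound n z hzr)
  rw [Summable.tsum_eq_zero_add hsum']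
  simp only [Nat.cast_zero, zero_mul, mul_zero, zero_add]
  -- right-hand side
  unfold extHLZeta
  rw [← tsum_mul_left]
  apply tsum_congr
  intro n
  have e1 : (υ + 1) - (ϑ + 1) = υ - ϑ := by ring
  have e2 : (ϑ + 1) + (n:ℂ) = ϑ + ((n+1:ℕ):ℂ) := by push_cast; ring
  have e3 : (n:ℂ) + (a + 1) = (((n+1:ℕ)):ℂ) + a := by push_cast; ring
  have hcne : ((((n+1:ℕ)):ℂ) + a) ^ σ ≠ 0 := by
    intro h
    rcases (Complex.cpow_eq_zero_iff _ _).mp h with ⟨h1, -⟩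
    exact ha (n+1) (by linear_combination h1)
  rw [e1, e2, e3, classicalBeta_shift hϑ hυϑ, hd]
  simp only
  rw [poch_succ, Nat.factorial_succ, Nat.cast_mul, Nat.succ_sub_one]
  have hfact : ((n.factorial : ℂ)) ≠ 0 := by exact_mod_cast Nat.factorial_ne_zero n
  have hn1 : ((n+1:ℕ):ℂ) ≠ 0 := Nat.cast_ne_zero.mpr (Nat.succ_ne_zero n)
  rw [← hBdef]
  exact alg_aux γ ϑ υ (poch (γ+1) n) (extBeta (ϑ + ((n+1:ℕ):ℂ)) (υ - ϑ) p lam) B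
    ((n.factorial : ℂ)) (((n+1:ℕ):ℂ)) ((((n+1:ℕ):ℂ) + a) ^ σ) (z^n) hB hϑ0 hυ0 hfact hn1 hcne
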